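/- Let N ≥ 1, let k ≥ 1 be a natural number, and for each index i ∈ Fin N ⊕ Fin N let f i : ZMod k → ZMod k be a bijection; let Φ : ((Fin N ⊕ Fin N) → ZMod k) → ((Fin N ⊕ Fin N) → ZMod k) be the componentwise map Φ(v) i = f i (v i). Then Φ commutes with the action of every matrix M ∈ Sp(2N,ℤ) on (ZMod k)^{2N} (acting by matrix-vector multiplication after reducing the entries of M modulo k) if and only if there exists a unit u ∈ (ZMod k)ˣ such that f i (x) = u·x for all i and all x. -/

import Mathlib

open Matrix

variable {N k : ℕ}

/-- Symmetric 0/1 matrix with 1s at (i,j) and (j,i). -/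
def pairB (N : ℕ) (i j : Fin N) : Matrix (Fin N) (Fin N) ℤ :=
  Matrix.of fun a b => if a = i ∧ b = j ∨ a = j ∧ b = i then 1 else 0

lemma pairB_transpose (i j : Fin N) : (pairB N i j)ᵀ = pairB N i j := by
  ext a b
  simp only [Matrix.transpose_apply, pairB, Matrix.of_apply]
  have h : (b = i ∧ a = j ∨ b = j ∧ a = i) ↔ (a = i ∧ b = j ∨ a = j ∧ b = i) := by tauto
  rw [if_congr h rfl rfl]

lemma pairB_row (i j : Fin N) (l : Fin N) :
    pairB N i j i l = if l = j then 1 else 0 := by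
  simp only [pairB, Matrix.of_apply]
  by_cases h : l = j
  · subst h; simp
  · rw [if_neg h, if_neg]
    rintro (⟨-, h'⟩ | ⟨hij, hl⟩)
    exacts [h h', h (hl.trans hij)]

lemma pairB_mulVec (i j : Fin N) (w : Fin N → ZMod k) :
    (((pairB N i j).map (Int.cast : ℤ → ZMod k)) *ᵥ w) i = w j := by
  simp only [Matrix.mulVec, dotProduct, Matrix.map_apply, pairB_row]
  rw [Finset.sum_eq_single j] <;> simp_all

lemma upper_mem (B : Matrix (Fin N) (Fin N) ℤ) (hB : Bᵀ = B) :
    Matrix.fromBlocks 1 B 0 1 ∈ Matrix.symplecticGroup (Fin N) ℤ := by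
  rw [SymplecticGroup.mem_iff, Matrix.J, Matrix.fromBlocks_transpose,
    Matrix.fromBlocks_multiply, Matrix.fromBlocks_multiply]
  simp [hB]

lemma lower_mem (C : Matrix (Fin N) (Fin N) ℤ) (hC : Cᵀ = C) :
    Matrix.fromBlocks 1 0 C 1 ∈ Matrix.symplecticGroup (Fin N) ℤ := by
  rw [SymplecticGroup.mem_iff, Matrix.J, Matrix.fromBlocks_transpose,
    Matrix.fromBlocks_multiply, Matrix.fromBlocks_multiply]
  simp [hC]

lemma map_fromBlocks_upper (B : Matrix (Fin N) (Fin N) ℤ) :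
    (Matrix.fromBlocks 1 B 0 1).map (Int.cast : ℤ → ZMod k) =
      Matrix.fromBlocks (1 : Matrix (Fin N) (Fin N) (ZMod k)) (B.map (Int.cast : ℤ → ZMod k)) (0 : Matrix (Fin N) (Fin N) (ZMod k)) 1 := by
  rw [Matrix.fromBlocks_map, Matrix.map_one _ Int.cast_zero Int.cast_one,
    Matrix.map_zero _ Int.cast_zero]

lemma map_fromBlocks_lower (C : Matrix (Fin N) (Fin N) ℤ) :
    (Matrix.fromBlocks 1 0 C 1).map (Int.cast : ℤ → ZMod k) =
      Matrix.fromBlocks (1 : Matrix (Fin N) (Fin N) (ZMod k)) (0 : Matrix (Fin N) (Fin N) (ZMod k)) (C.map (Int.cast : ℤ → ZMod k)) 1 := by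
  rw [Matrix.fromBlocks_map, Matrix.map_one _ Int.cast_zero Int.cast_one,
    Matrix.map_zero _ Int.cast_zero]

lemma extract_upper {f : (Fin N ⊕ Fin N) → ZMod k → ZMod k}
    (h : ∀ M ∈ Matrix.symplecticGroup (Fin N) ℤ, ∀ v : (Fin N ⊕ Fin N) → ZMod k,
        (fun i => f i ((M.map (Int.cast : ℤ → ZMod k)).mulVec v i)) =
          (M.map (Int.cast : ℤ → ZMod k)).mulVec (fun i => f i (v i)))
    (i j : Fin N) (x y : ZMod k) :
    f (Sum.inl i) (x + y) = f (Sum.inl i) x + f (Sum.inr j) y := by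
  have hM := h _ (upper_mem (pairB N i j) (pairB_transpose i j))
    (Sum.elim (fun _ => x) (fun _ => y))
  have h2 := congrFun hM (Sum.inl i)
  simp only [map_fromBlocks_upper, Matrix.fromBlocks_mulVec, Matrix.one_mulVec,
    Matrix.zero_mulVec, Sum.elim_inl, Pi.add_apply, zero_add, Function.comp] at h2
  rw [pairB_mulVec, pairB_mulVec] at h2
  simpa using h2

lemma extract_lower {f : (Fin N ⊕ Fin N) → ZMod k → ZMod k}
    (h : ∀ M ∈ Matrix.symplecticGroup (Fin N) ℤ, ∀ v : (Fin N ⊕ Fin N) → ZMod k,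
        (fun i => f i ((M.map (Int.cast : ℤ → ZMod k)).mulVec v i)) =
          (M.map (Int.cast : ℤ → ZMod k)).mulVec (fun i => f i (v i)))
    (i j : Fin N) (x y : ZMod k) :
    f (Sum.inr i) (x + y) = f (Sum.inr i) x + f (Sum.inl j) y := by
  have hM := h _ (lower_mem (pairB N i j) (pairB_transpose i j))
    (Sum.elim (fun _ => y) (fun _ => x))
  have h2 := congrFun hM (Sum.inr i)
  simp only [map_fromBlocks_lower, Matrix.fromBlocks_mulVec, Matrix.one_mulVec,
    Matrix.zero_mulVec, Sum.elim_inr, Pi.add_apply, add_zero, Function.comp] at h2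
  rw [pairB_mulVec, pairB_mulVec] at h2
  rw [add_comm x y]
  simpa [add_comm] using h2

/-- A componentwise bijection `Φ(v) i = f i (v i)` of `(ℤ/kℤ)^{2N}` commutes with
the action of every matrix of `Sp(2N,ℤ)` (acting by matrix-vector multiplication
after reducing the entries mod `k`) iff there is a single unit `u ∈ (ℤ/kℤ)ˣ` with
`f i x = u·x` for all `i` and `x`. -/
theorem symplectic_equivariant_componentwise_bijections {N : ℕ} (hN : 1 ≤ N)
    (k : ℕ) (hk : 1 ≤ k) (f : (Fin N ⊕ Fin N) → ZMod k → ZMod k)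
    (hf : ∀ i, Function.Bijective (f i)) :
    (∀ M ∈ Matrix.symplecticGroup (Fin N) ℤ, ∀ v : (Fin N ⊕ Fin N) → ZMod k,
        (fun i => f i ((M.map (Int.cast : ℤ → ZMod k)).mulVec v i)) =
          (M.map (Int.cast : ℤ → ZMod k)).mulVec (fun i => f i (v i))) ↔
    (∃ u : (ZMod k)ˣ, ∀ (i : Fin N ⊕ Fin N) (x : ZMod k), f i x = (u : ZMod k) * x) := by
  constructor
  · intro h
    set i0 : Fin N := ⟨0, hN⟩ with hi0
    have hup := extract_upper h
    have hlow := extract_lower h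
    have h0r : ∀ j, f (Sum.inr j) 0 = 0 := by
      intro j
      have := hup i0 j 0 0
      rw [add_zero] at this
      exact (left_eq_add.mp this)
    have h0l : ∀ j, f (Sum.inl j) 0 = 0 := by
      intro j
      have := hlow i0 j 0 0
      rw [add_zero] at this
      exact (left_eq_add.mp this)
    have hinr : ∀ (a : Fin N) (x : ZMod k), f (Sum.inr a) x = f (Sum.inl i0) x := by
      intro a x
      have := hlow a i0 0 x
      rw [zero_add, h0r a, zero_add] at this
      exact this
    have hEq : ∀ i x, f i x = f (Sum.inl i0) x := by
      rintro (a | a) x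
      · have := hup a i0 0 x
        rw [zero_add, h0l a, zero_add] at this
        rw [this, hinr]
      · exact hinr a x
    set g := f (Sum.inl i0) with hg
    have hadd : ∀ x y, g (x + y) = g x + g y := by
      intro x y
      have := hup i0 i0 x y
      rwa [hinr i0 y] at this
    have hnat : ∀ n : ℕ, g (n : ZMod k) = g 1 * (n : ZMod k) := by
      intro n
      induction n with
      | zero => simpa using h0l i0
      | succ m ih =>
        push_cast
        rw [hadd, ih]
        ring
    haveI : NeZero k := ⟨by omega⟩
    have hx : ∀ x : ZMod k, g x = g 1 * x := by
      intro x
      conv_lhs => rw [← ZMod.natCast_rightInverse x]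
      rw [hnat, ZMod.natCast_rightInverse x]
    obtain ⟨y, hy⟩ := (hf (Sum.inl i0)).2 1
    have hu : g 1 * y = 1 := by rw [← hx y]; exact hy
    refine ⟨(IsUnit.of_mul_eq_one _ hu).unit, ?_⟩
    intro i x
    rw [hEq i x, hx x, IsUnit.unit_spec]
  · rintro ⟨u, hu⟩ M hM v
    funext p
    simp only [hu, Matrix.mulVec, dotProduct, Finset.mul_sum]
    exact Finset.sum_congr rfl fun q _ => by ring
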